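/- In the interference-limited case (σ² = 0) with η = 4 and infinite P_u, the uplink SINR outage probability equals O_s(θ) = 1 − exp(−√θ · arctan(√θ)) for all θ > 0; i.e., starting from O_s = 1 − exp(−2√θ ∫_{θ^{−1/4}}^{∞} y/(y⁴+1) dy), the integral evaluates to (1/2)arctan(√θ). -/

import Mathlib

open Real MeasureTheory Set Filter

lemma integral_aux (a : ℝ) (ha : 0 < a) :
    (∫ y in Ioi a, y / (y ^ 4 + 1)) = π / 4 - (1/2) * arctan (a ^ 2) := by
  have hderiv : ∀ x ∈ Ici a, HasDerivAt (fun y : ℝ => (1/2) * arctan (y ^ 2))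
      (x / (x ^ 4 + 1)) x := by
    intro x hx
    have h1 : HasDerivAt (fun y : ℝ => y ^ 2) (2 * x) x := by
      simpa using (hasDerivAt_pow 2 x)
    have h2 := (Real.hasDerivAt_arctan (x ^ 2)).comp x h1
    have h3 := h2.const_mul (1/2 : ℝ)
    convert h3 using 1
    case e'_4 => rfl
    case e'_5 => rfl
    case e'_8 => rfl
    have : (x ^ 2) ^ 2 = x ^ 4 := by ring
    rw [this]
    field_simp
    ring
  have hpos : ∀ x ∈ Ioi a, 0 ≤ x / (x ^ 4 + 1) := by
    intro x hx
    have hx0 : (0:ℝ) < x := lt_trans ha hx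
    positivity
  have htend : Tendsto (fun y : ℝ => (1/2) * arctan (y ^ 2)) atTop (nhds ((1/2) * (π/2))) := by
    refine Tendsto.const_mul _ ((Real.tendsto_arctan_atTop.mono_right nhdsWithin_le_nhds).comp ?_)
    exact tendsto_pow_atTop (by norm_num)
  have := integral_Ioi_of_hasDerivAt_of_nonneg' hderiv hpos htend
  rw [this]; ring

/-- Interference-limited case, `η = 4`, infinite `P_u`: the uplink SINR outage
`1 - exp(-2√θ ∫_{θ^(-1/4)}^∞ y/(y⁴+1) dy)` equals `1 - exp(-√θ arctan √θ)`. -/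
theorem sinr_outage_closed_form_eta_four (θ : ℝ) (hθ : 0 < θ) :
    1 - exp (-(2 * Real.sqrt θ * ∫ y in Ioi (θ ^ (-(1:ℝ)/4)), y / (y ^ 4 + 1)))
      = 1 - exp (-(Real.sqrt θ * arctan (Real.sqrt θ))) := by
  have ha : (0:ℝ) < θ ^ (-(1:ℝ)/4) := Real.rpow_pos_of_pos hθ _
  rw [integral_aux _ ha]
  have hsq : (θ ^ (-(1:ℝ)/4)) ^ 2 = (Real.sqrt θ)⁻¹ := by
    rw [← Real.rpow_natCast (θ ^ (-(1:ℝ)/4)) 2, ← Real.rpow_mul hθ.le,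
      Real.sqrt_eq_rpow, ← Real.rpow_neg hθ.le]
    norm_num
  rw [hsq, Real.arctan_inv_of_pos (Real.sqrt_pos.mpr hθ)]
  ring_nf
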